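/- For every uncountable set T of conditions in 𝔸″ there exist a finite sequence u and an uncountable subset T′ ⊆ T such that every element of T′ has first coordinate u, and for every ℓ ∈ ℕ there is a subset F ⊆ T′ of cardinality ℓ which has a common lower bound in 𝔸″. -/

import Mathlib

open MeasureTheory

noncomputable section

/-- The binary-digit map sending `r ∈ [0,1)` to its sequence of binary digits,
so `binDigits r n` is the `n`-th binary digit of `r`. -/
def binDigits (r : ℝ) : ℕ → Bool := fun n => decide (⌊r * 2 ^ (n + 1)⌋ % 2 = 1)

/-- The uniform product ("coin-flipping") probability measure `μ` on Cantor space `2^ω`,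
realized as the pushforward of Lebesgue measure on `[0,1)` under the binary-digit map. -/
def μC : Measure (ℕ → Bool) := (volume.restrict (Set.Ico (0 : ℝ) 1)).map binDigits

/-- The basic clopen cylinder `[σ]` determined by a finite binary string `σ`. -/
def cyl (σ : List Bool) : Set (ℕ → Bool) :=
  {f | ∀ i : ℕ, ∀ h : i < σ.length, f i = σ.get ⟨i, h⟩}

/-- Property (*): for every binary string `σ` of length `i` not in `φ i`, the union of the
cylinders determined by proper extensions of `σ` appearing in some `φ j`, `j > i`,
has measure `< 2^{-i}`. -/
def StarProperty (φ : ℕ → Set (List Bool)) : Prop :=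
  ∀ i : ℕ, ∀ σ : List Bool, σ.length = i → σ ∉ φ i →
    μC (⋃ τ ∈ {τ : List Bool | σ <+: τ ∧ σ ≠ τ ∧ ∃ j, i < j ∧ τ ∈ φ j}, cyl τ)
      < (1 / 2 : ENNReal) ^ i

/-- A condition `(u, φ)` of the partial order `𝔸′`: `φ` assigns to each `i` a set of binary
strings of length `i`, satisfies (*), the union of all the corresponding cylinders has measure
`< 1/2`, and `u = φ↾n` is a finite initial segment of `φ` (represented by its domain `n`). -/
structure APrime where
  /-- the domain of the finite initial segment `u` (so `u = φ↾n`) -/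
  n : ℕ
  /-- the function `φ` -/
  φ : ℕ → Set (List Bool)
  hlen : ∀ i : ℕ, ∀ σ ∈ φ i, σ.length = i
  hstar : StarProperty φ
  hmeas : μC (⋃ i, ⋃ σ ∈ φ i, cyl σ) < 1 / 2

/-- The order of `𝔸′`: `(u,φ) ≤ (v,ψ)` iff `u ⊇ v` and every string in some `ψ i` extends a
string in some `φ j` with `j ≤ i`. -/
def APrimeLe (p q : APrime) : Prop :=
  q.n ≤ p.n ∧ (∀ i < q.n, p.φ i = q.φ i) ∧
    ∀ i : ℕ, ∀ σ ∈ q.φ i, ∃ j ≤ i, ∃ τ ∈ p.φ j, τ <+: σ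

/-- Membership in the suborder `𝔸″ ⊆ 𝔸′`.  (The inequalities `μ > 1/2 - 2^{-m}` and
`μ ≤ 1/2 - 2^{-m}` are stated additively as `μ + 2^{-m} > 1/2`, resp. `≤`, to express
real-number subtraction faithfully in `ℝ≥0∞`.) -/
def InAPP (p : APrime) : Prop :=
  ∃ m : ℕ,
    1 / 2 < μC (⋃ i < p.n, ⋃ σ ∈ p.φ i, cyl σ) + (1 / 2 : ENNReal) ^ m ∧
    μC (⋃ i < p.n - 1, ⋃ σ ∈ p.φ i, cyl σ) + (1 / 2 : ENNReal) ^ m ≤ 1 / 2 ∧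
    μC (⋃ i, ⋃ _ : p.n ≤ i, ⋃ σ ∈ p.φ i, cyl σ) < (1 / 2 : ENNReal) ^ (m + 7)



-- ## Part I: basic measure facts

lemma measurable_binDigits : Measurable binDigits := by
  apply measurable_pi_lambda
  intro n
  have h1 : Measurable fun r : ℝ => ⌊r * 2 ^ (n + 1)⌋ :=
    Int.measurable_floor.comp (measurable_id.mul_const _)
  exact (measurable_from_top (f := fun z : ℤ => decide (z % 2 = 1))).comp h1

lemma measurableSet_cyl (σ : List Bool) : MeasurableSet (cyl σ) := by
  have : cyl σ = ⋂ i : Fin σ.length, (fun f : ℕ → Bool => f i.1) ⁻¹' {σ.get i} := by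
    ext f
    simp only [cyl, Set.mem_setOf_eq, Set.mem_iInter, Set.mem_preimage, Set.mem_singleton_iff]
    exact ⟨fun h i => h i.1 i.2, fun h i hi => h ⟨i, hi⟩⟩
  rw [this]
  exact MeasurableSet.iInter fun i => (measurable_pi_apply _) (MeasurableSet.singleton _)

lemma cyl_mono {σ τ : List Bool} (h : σ <+: τ) : cyl τ ⊆ cyl σ := by
  intro f hf i hi
  have hlen : i < τ.length := lt_of_lt_of_le hi h.length_le
  have := hf i hlen
  rw [this]
  obtain ⟨t, rfl⟩ := h
  simp [List.get_eq_getElem, List.getElem_append, hi]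

lemma cyl_compat {σ τ : List Bool} {x : ℕ → Bool} (hσ : x ∈ cyl σ) (hτ : x ∈ cyl τ) :
    σ <+: τ ∨ τ <+: σ := by
  rcases le_total σ.length τ.length with h | h
  · left
    refine List.prefix_iff_eq_take.mpr ?_
    apply List.ext_get (by simp [h])
    intro i h1 h2
    have e1 := hσ i h1
    have e2 := hτ i (lt_of_lt_of_le h1 h)
    simp only [List.get_eq_getElem, List.getElem_take] at e1 e2 ⊢
    rw [← e1, ← e2]
  · right
    refine List.prefix_iff_eq_take.mpr ?_
    apply List.ext_get (by simp [h])
    intro i h1 h2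
    have e1 := hτ i h1
    have e2 := hσ i (lt_of_lt_of_le h1 h)
    simp only [List.get_eq_getElem, List.getElem_take] at e1 e2 ⊢
    rw [← e1, ← e2]

lemma natFloor_succ_decomp {r : ℝ} (hr : 0 ≤ r) (k : ℕ) :
    ⌊r * 2 ^ (k + 1)⌋₊ = 2 * ⌊r * 2 ^ k⌋₊ + ⌊r * 2 ^ (k + 1)⌋₊ % 2 := by
  have h1 : ⌊r * 2 ^ (k + 1)⌋₊ / 2 = ⌊r * 2 ^ k⌋₊ := by
    rw [← Nat.floor_div_natCast]
    congr 1
    push_cast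
    ring
  conv_lhs => rw [← Nat.div_add_mod (⌊r * 2 ^ (k + 1)⌋₊) 2]
  rw [h1]

lemma binDigits_eq_mod {r : ℝ} (hr : 0 ≤ r) (k : ℕ) :
    binDigits r k = decide (⌊r * 2 ^ (k + 1)⌋₊ % 2 = 1) := by
  have h0 : (0:ℝ) ≤ r * 2 ^ (k+1) := by positivity
  have h := Int.natCast_floor_eq_floor h0
  simp only [binDigits, ← h]
  norm_cast

lemma floor_eq_of_digits_eq {r s : ℝ} (hr : r ∈ Set.Ico (0:ℝ) 1) (hs : s ∈ Set.Ico (0:ℝ) 1)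
    (k : ℕ) (h : ∀ i < k, binDigits r i = binDigits s i) :
    ⌊r * 2 ^ k⌋₊ = ⌊s * 2 ^ k⌋₊ := by
  induction k with
  | zero =>
    simp only [pow_zero, mul_one]
    rw [Nat.floor_eq_zero.mpr hr.2, Nat.floor_eq_zero.mpr hs.2]
  | succ k ih =>
    have hrec := ih (fun i hi => h i (Nat.lt_succ_of_lt hi))
    have hd : ⌊r * 2 ^ (k + 1)⌋₊ % 2 = ⌊s * 2 ^ (k + 1)⌋₊ % 2 := by
      have hb := h k (Nat.lt_succ_self k)
      rw [binDigits_eq_mod hr.1, binDigits_eq_mod hs.1] at hb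
      have h2r : ⌊r * 2 ^ (k + 1)⌋₊ % 2 = 0 ∨ ⌊r * 2 ^ (k + 1)⌋₊ % 2 = 1 :=
        Nat.mod_two_eq_zero_or_one _
      have h2s : ⌊s * 2 ^ (k + 1)⌋₊ % 2 = 0 ∨ ⌊s * 2 ^ (k + 1)⌋₊ % 2 = 1 :=
        Nat.mod_two_eq_zero_or_one _
      rcases h2r with h2r | h2r <;> rcases h2s with h2s | h2s <;>
        simp [h2r, h2s] at hb ⊢
    rw [natFloor_succ_decomp hr.1 k, natFloor_succ_decomp hs.1 k, hrec, hd]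

lemma μC_apply {S : Set (ℕ → Bool)} (hS : MeasurableSet S) :
    μC S = volume (binDigits ⁻¹' S ∩ Set.Ico (0:ℝ) 1) := by
  rw [μC, Measure.map_apply measurable_binDigits hS,
    Measure.restrict_apply (measurable_binDigits hS)]

lemma μC_univ : μC Set.univ = 1 := by
  rw [μC_apply MeasurableSet.univ]
  simp

instance : IsFiniteMeasure μC := ⟨by rw [μC_univ]; exact ENNReal.one_lt_top⟩

lemma μC_ne_top (S : Set (ℕ → Bool)) : μC S ≠ ⊤ := measure_ne_top _ _

lemma ofReal_inv_two_pow (k : ℕ) : ENNReal.ofReal (((2:ℝ) ^ k)⁻¹) = (1/2 : ENNReal) ^ k := by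
  rw [← inv_pow, ENNReal.ofReal_pow (by norm_num : (0:ℝ) ≤ (2:ℝ)⁻¹),
    ENNReal.ofReal_inv_of_pos (by norm_num : (0:ℝ) < 2)]
  norm_num

lemma μC_cyl_le (σ : List Bool) : μC (cyl σ) ≤ (1/2 : ENNReal) ^ σ.length := by
  set k := σ.length with hk
  rw [μC_apply (measurableSet_cyl σ)]
  set P := binDigits ⁻¹' cyl σ ∩ Set.Ico (0:ℝ) 1 with hP
  rcases P.eq_empty_or_nonempty with hPe | ⟨r₀, hr₀⟩
  · simp [hPe]
  · set N := ⌊r₀ * 2 ^ k⌋₊ with hN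
    have key : P ⊆ Set.Ico ((N : ℝ) / 2 ^ k) ((N : ℝ) / 2 ^ k + ((2:ℝ) ^ k)⁻¹) := by
      intro r hr
      have hfl : ⌊r * 2 ^ k⌋₊ = N := by
        rw [hN]
        refine floor_eq_of_digits_eq hr.2 hr₀.2 k ?_
        intro i hi
        have h1 := hr.1 i (hk ▸ hi)
        have h2 := hr₀.1 i (hk ▸ hi)
        rw [h1, h2]
      have hpos : (0:ℝ) < 2 ^ k := by positivity
      have hrnn : (0:ℝ) ≤ r * 2 ^ k := mul_nonneg hr.2.1 hpos.le
      have hlow : (N : ℝ) ≤ r * 2 ^ k := hfl ▸ Nat.floor_le hrnn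
      have hhigh : r * 2 ^ k < (N : ℝ) + 1 := by
        have := Nat.lt_floor_add_one (r * 2 ^ k)
        rw [hfl] at this
        exact_mod_cast this
      constructor
      · rw [div_le_iff₀ hpos]
        exact hlow
      · rw [← lt_div_iff₀ hpos] at hhigh
        calc r < ((N:ℝ) + 1) / 2 ^ k := hhigh
        _ = (N : ℝ) / 2 ^ k + ((2:ℝ) ^ k)⁻¹ := by ring
    calc volume P ≤ volume (Set.Ico ((N : ℝ) / 2 ^ k) ((N : ℝ) / 2 ^ k + ((2:ℝ) ^ k)⁻¹)) :=
        measure_mono key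
    _ = ENNReal.ofReal (((2:ℝ) ^ k)⁻¹) := by rw [Real.volume_Ico]; ring_nf
    _ = (1/2 : ENNReal) ^ k := ofReal_inv_two_pow k

-- ## Part II: helper sets and lemmas

/-- The union of cylinders of the whole family. -/
def fullU (φ : ℕ → Set (List Bool)) : Set (ℕ → Bool) := ⋃ i, ⋃ σ ∈ φ i, cyl σ

/-- The union of cylinders of levels `< n`. -/
def headU (φ : ℕ → Set (List Bool)) (n : ℕ) : Set (ℕ → Bool) :=
  ⋃ i, ⋃ _ : i < n, ⋃ σ ∈ φ i, cyl σ

/-- The union of cylinders of levels `≥ n`. -/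
def tailU (φ : ℕ → Set (List Bool)) (n : ℕ) : Set (ℕ → Bool) :=
  ⋃ i, ⋃ _ : n ≤ i, ⋃ σ ∈ φ i, cyl σ

/-- The union of cylinders of proper extensions of `σ` at levels `> i`. -/
def estU (φ : ℕ → Set (List Bool)) (i : ℕ) (σ : List Bool) : Set (ℕ → Bool) :=
  ⋃ τ ∈ {τ : List Bool | σ <+: τ ∧ σ ≠ τ ∧ ∃ j, i < j ∧ τ ∈ φ j}, cyl τ

lemma measurableSet_biUnion_cyl (S : Set (List Bool)) :
    MeasurableSet (⋃ σ ∈ S, cyl σ) :=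
  MeasurableSet.biUnion (Set.to_countable S) fun σ _ => measurableSet_cyl σ

lemma measurableSet_fullU (φ : ℕ → Set (List Bool)) : MeasurableSet (fullU φ) :=
  MeasurableSet.iUnion fun i => measurableSet_biUnion_cyl (φ i)

lemma measurableSet_headU (φ : ℕ → Set (List Bool)) (n : ℕ) : MeasurableSet (headU φ n) :=
  MeasurableSet.iUnion fun i => MeasurableSet.iUnion fun _ => measurableSet_biUnion_cyl (φ i)

lemma measurableSet_tailU (φ : ℕ → Set (List Bool)) (n : ℕ) : MeasurableSet (tailU φ n) :=
  MeasurableSet.iUnion fun i => MeasurableSet.iUnion fun _ => measurableSet_biUnion_cyl (φ i)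

lemma measurableSet_estU (φ : ℕ → Set (List Bool)) (i : ℕ) (σ : List Bool) :
    MeasurableSet (estU φ i σ) := measurableSet_biUnion_cyl _

lemma estU_subset_cyl (φ : ℕ → Set (List Bool)) (σ : List Bool) :
    estU φ σ.length σ ⊆ cyl σ := by
  intro x hx
  simp only [estU, Set.mem_iUnion, Set.mem_setOf_eq] at hx
  obtain ⟨τ, ⟨hpre, _, _⟩, hxτ⟩ := hx
  exact cyl_mono hpre hxτ

lemma exists_uncountable_fiber {α β : Type*} [Countable β] {S : Set α} (h : ¬ S.Countable)
    (f : α → β) : ∃ b, ¬ {a ∈ S | f a = b}.Countable := by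
  by_contra hc
  push_neg at hc
  apply h
  have hS : S = ⋃ b : β, {a ∈ S | f a = b} := by
    ext a; simp
  rw [hS]
  exact Set.countable_iUnion fun b => hc b

lemma half_pow_anti {J J' : ℕ} (h : J ≤ J') : (1/2 : ENNReal) ^ J' ≤ (1/2 : ENNReal) ^ J := by
  obtain ⟨d, rfl⟩ := Nat.exists_eq_add_of_le h
  rw [pow_add]
  exact mul_le_of_le_one_right' (pow_le_one' (by norm_num) d)

lemma exists_pow_gap {a b : ENNReal} (h : a < b) : ∃ J : ℕ, a + (1/2 : ENNReal) ^ J < b := by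
  obtain ⟨r, hr, hab⟩ := ENNReal.lt_iff_exists_add_pos_lt.mp h
  obtain ⟨J, hJ⟩ := ENNReal.exists_inv_two_pow_lt (by exact_mod_cast hr.ne' : (r : ENNReal) ≠ 0)
  refine ⟨J, lt_of_le_of_lt (add_le_add_right ?_ a) hab⟩
  calc (1/2 : ENNReal) ^ J = 2⁻¹ ^ J := by norm_num
  _ ≤ (r : ENNReal) := hJ.le

lemma exists_uniform_J {α : Type*} {S : Set α} (hS : S.Finite) (P : α → ℕ → Prop)
    (mono : ∀ a, ∀ J J' : ℕ, J ≤ J' → P a J → P a J')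
    (h : ∀ a ∈ S, ∃ J, P a J) : ∃ J, ∀ a ∈ S, P a J := by
  classical
  refine ⟨hS.toFinset.sup fun a => if ha : a ∈ S then (h a ha).choose else 0, ?_⟩
  intro a ha
  have h1 : P a (if ha' : a ∈ S then (h a ha').choose else 0) := by
    rw [dif_pos ha]
    exact (h a ha).choose_spec
  exact mono a _ _ (Finset.le_sup (hS.mem_toFinset.mpr ha)) h1

lemma tailU_eq_biUnion (φ : ℕ → Set (List Bool)) (n : ℕ) :
    tailU φ n = ⋃ σ ∈ {σ : List Bool | ∃ i, n ≤ i ∧ σ ∈ φ i}, cyl σ := by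
  ext x
  simp only [tailU, Set.mem_iUnion, Set.mem_setOf_eq]
  constructor
  · rintro ⟨i, hi, σ, hσ, hx⟩
    exact ⟨σ, ⟨i, hi, hσ⟩, hx⟩
  · rintro ⟨σ, ⟨i, hi, hσ⟩, hx⟩
    exact ⟨i, hi, σ, hσ, hx⟩

lemma exists_finset_approx (S : Set (List Bool)) {η : ENNReal} (hη : 0 < η) :
    ∃ C : Finset (List Bool), ↑C ⊆ S ∧
      μC ((⋃ σ ∈ S, cyl σ) \ ⋃ σ ∈ (C : Set (List Bool)), cyl σ) ≤ η := by
  classical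
  rcases S.eq_empty_or_nonempty with rfl | hne
  · exact ⟨∅, by simp, by simp⟩
  obtain ⟨f, rfl⟩ := (Set.to_countable S).exists_eq_range hne
  set U : Set (ℕ → Bool) := ⋃ σ ∈ Set.range f, cyl σ with hU
  set B : ℕ → Set (ℕ → Bool) := fun N => ⋃ j ∈ Finset.range N, cyl (f j) with hB
  have hBmeas : ∀ N, MeasurableSet (B N) := fun N =>
    MeasurableSet.biUnion (Finset.range N).countable_toSet fun j _ => measurableSet_cyl (f j)
  have hBmono : Monotone B := by
    intro N N' hNN'
    simp only [hB]
    exact Set.iUnion₂_subset fun j hj => Set.subset_iUnion₂ (s := fun j _ => cyl (f j)) j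
      (Finset.mem_range.mpr (lt_of_lt_of_le (Finset.mem_range.mp hj) hNN'))
  have hBU : ⋃ N, B N = U := by
    ext x
    simp only [hB, hU, Set.mem_iUnion, Set.mem_range, Finset.mem_range]
    constructor
    · rintro ⟨N, j, _, hx⟩; exact ⟨f j, ⟨j, rfl⟩, hx⟩
    · rintro ⟨σ, ⟨j, rfl⟩, hx⟩; exact ⟨j + 1, j, Nat.lt_succ_self j, hx⟩
  have hsup : ⨆ N, μC (B N) = μC U := by
    rw [← hBU]
    exact (Directed.measure_iUnion (Monotone.directed_le hBmono)).symm
  rcases lt_or_ge (μC U) η with hlt | hle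
  · exact ⟨∅, by simp, by
      refine le_trans (measure_mono ?_) hlt.le
      simp⟩
  · have h1 : μC U - η < ⨆ N, μC (B N) := by
      rw [hsup]
      exact ENNReal.sub_lt_self (μC_ne_top U) (lt_of_lt_of_le hη hle).ne' hη.ne'
    obtain ⟨N, hN⟩ := lt_iSup_iff.mp h1
    refine ⟨(Finset.range N).image f, ?_, ?_⟩
    · intro σ hσ
      simp only [Finset.coe_image, Set.mem_image, Finset.mem_coe, Finset.mem_range] at hσ
      obtain ⟨j, _, rfl⟩ := hσ
      exact ⟨j, rfl⟩
    · have hBN : ⋃ σ ∈ ((Finset.range N).image f : Set (List Bool)), cyl σ = B N := by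
        ext x
        simp [hB]
      rw [hBN]
      have hμ : μC U ≤ η + μC (B N) := by
        have h2 := hN.le
        rw [tsub_le_iff_right] at h2
        calc μC U ≤ μC (B N) + η := h2
        _ = η + μC (B N) := add_comm _ _
      have hdiff : μC (U \ B N) = μC U - μC (B N) :=
        measure_diff (hBU ▸ Set.subset_iUnion B N : B N ⊆ U)
          (hBmeas N).nullMeasurableSet (μC_ne_top _)
      rw [hdiff]
      exact tsub_le_iff_right.mpr hμ

lemma mem_estU {φ : ℕ → Set (List Bool)} {i : ℕ} {σ : List Bool} {x : ℕ → Bool} :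
    x ∈ estU φ i σ ↔ ∃ τ, (σ <+: τ ∧ σ ≠ τ ∧ ∃ j, i < j ∧ τ ∈ φ j) ∧ x ∈ cyl τ := by
  simp only [estU, Set.mem_iUnion, Set.mem_setOf_eq, exists_prop]

lemma subset_estU {φ : ℕ → Set (List Bool)} {i j : ℕ} {σ τ : List Bool}
    (hpre : σ <+: τ) (hne : σ ≠ τ) (hj : i < j) (hτ : τ ∈ φ j) : cyl τ ⊆ estU φ i σ :=
  fun x hx => mem_estU.mpr ⟨τ, ⟨hpre, hne, j, hj, hτ⟩, hx⟩

lemma subset_fullU {φ : ℕ → Set (List Bool)} {i : ℕ} {σ : List Bool} (hσ : σ ∈ φ i) :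
    cyl σ ⊆ fullU φ :=
  fun x hx => Set.mem_iUnion.mpr ⟨i, Set.mem_iUnion₂.mpr ⟨σ, hσ, hx⟩⟩

lemma subset_tailU {φ : ℕ → Set (List Bool)} {n i : ℕ} {σ : List Bool}
    (hi : n ≤ i) (hσ : σ ∈ φ i) : cyl σ ⊆ tailU φ n :=
  fun x hx => Set.mem_iUnion.mpr ⟨i, Set.mem_iUnion.mpr ⟨hi, Set.mem_iUnion₂.mpr ⟨σ, hσ, hx⟩⟩⟩

lemma mem_fullU {φ : ℕ → Set (List Bool)} {x : ℕ → Bool} :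
    x ∈ fullU φ ↔ ∃ i σ, σ ∈ φ i ∧ x ∈ cyl σ := by
  simp only [fullU, Set.mem_iUnion, exists_prop]

lemma mem_tailU {φ : ℕ → Set (List Bool)} {n : ℕ} {x : ℕ → Bool} :
    x ∈ tailU φ n ↔ ∃ i, n ≤ i ∧ ∃ σ, σ ∈ φ i ∧ x ∈ cyl σ := by
  simp only [tailU, Set.mem_iUnion, exists_prop]

lemma tailU_subset_fullU (φ : ℕ → Set (List Bool)) (n : ℕ) : tailU φ n ⊆ fullU φ := by
  intro x hx
  obtain ⟨i, _, σ, hσ, hx'⟩ := mem_tailU.mp hx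
  exact subset_fullU hσ hx'

lemma construct (n m : ℕ) (γ η : ENNReal) (F : Finset APrime) (p₁ : APrime) (hp₁ : p₁ ∈ F)
    (C : Finset (List Bool))
    (hn : ∀ p ∈ F, p.n = n)
    (hagree : ∀ p ∈ F, ∀ i < n, p.φ i = p₁.φ i)
    (hwitA : 1 / 2 < μC (headU p₁.φ n) + (1/2 : ENNReal) ^ m)
    (hwitB : μC (headU p₁.φ (n - 1)) + (1/2 : ENNReal) ^ m ≤ 1 / 2)
    (g1 : μC (fullU p₁.φ) + γ < 1 / 2)
    (g2 : μC (tailU p₁.φ n) + γ < (1/2 : ENNReal) ^ (m + 7))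
    (g3 : ∀ i < n, ∀ σ : List Bool, σ.length = i → σ ∉ p₁.φ i →
      μC (estU p₁.φ i σ) + γ < (1/2 : ENNReal) ^ i)
    (hC : ∀ p ∈ F, ∀ σ ∈ C, ∃ i, n ≤ i ∧ σ ∈ p.φ i)
    (hCap : ∀ p ∈ F, μC (tailU p.φ n \ ⋃ σ ∈ (C : Set (List Bool)), cyl σ) ≤ η)
    (hsum : (F.card : ENNReal) * η ≤ γ) :
    ∃ q : APrime, InAPP q ∧ ∀ p ∈ F, APrimeLe q p := by
  classical
  set UC : Set (ℕ → Bool) := ⋃ σ ∈ (C : Set (List Bool)), cyl σ with hUC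
  set comb : ℕ → Set (List Bool) := fun j => {σ | ∃ p ∈ F, σ ∈ p.φ j} with hcomb
  have hcomb_len : ∀ j σ, σ ∈ comb j → σ.length = j := by
    rintro j σ ⟨p, hp, hσ⟩
    exact p.hlen j σ hσ
  have hcomb_lt : ∀ j, j < n → comb j = p₁.φ j := by
    intro j hj
    ext σ
    constructor
    · rintro ⟨p, hp, hσ⟩
      rw [← hagree p hp j hj]
      exact hσ
    · intro hσ
      exact ⟨p₁, hp₁, hσ⟩
  set Ec : List Bool → Set (ℕ → Bool) := fun σ => estU comb σ.length σ with hEc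
  have hEc_meas : ∀ σ, MeasurableSet (Ec σ) := fun σ => measurableSet_estU comb σ.length σ
  have hEc_cyl : ∀ σ, Ec σ ⊆ cyl σ := fun σ => estU_subset_cyl comb σ
  set qφ : ℕ → Set (List Bool) := fun i =>
    if i < n then p₁.φ i else
      {σ | σ.length = i ∧ ((∃ j, n ≤ j ∧ ∃ ρ ∈ comb j, ρ <+: σ) ∨
        (1/2 : ENNReal) ^ i ≤ μC (Ec σ))} with hqφ
  have hqφ_lt : ∀ i, i < n → qφ i = p₁.φ i := fun i hi => if_pos hi
  have hqφ_ge : ∀ i, ¬ i < n → qφ i =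
      {σ : List Bool | σ.length = i ∧ ((∃ j, n ≤ j ∧ ∃ ρ ∈ comb j, ρ <+: σ) ∨
        (1/2 : ENNReal) ^ i ≤ μC (Ec σ))} := fun i hi => if_neg hi
  set Rp : APrime → Set (ℕ → Bool) := fun p => tailU p.φ n \ UC with hRp
  set RR : Set (ℕ → Bool) := ⋃ p ∈ F, Rp p with hRR
  have hRRμ : μC RR ≤ γ := by
    calc μC RR ≤ ∑ p ∈ F, μC (Rp p) := measure_biUnion_finset_le F Rp
    _ ≤ F.card • η := Finset.sum_le_card_nsmul F _ η fun p hp => hCap p hp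
    _ = (F.card : ENNReal) * η := nsmul_eq_mul _ _
    _ ≤ γ := hsum
  have hUC_tail : ∀ p ∈ F, UC ⊆ tailU p.φ n := by
    intro p hp x hx
    obtain ⟨σ, hσC, hxσ⟩ := Set.mem_iUnion₂.mp hx
    obtain ⟨i, hi, hσp⟩ := hC p hp σ hσC
    exact subset_tailU hi hσp hxσ
  have htail_sub : ∀ p ∈ F, tailU p.φ n ⊆ UC ∪ Rp p := by
    intro p hp x hx
    by_cases hxU : x ∈ UC
    · exact Or.inl hxU
    · exact Or.inr ⟨hx, hxU⟩
  have hcomb_cyl : ∀ j ρ, ρ ∈ comb j → n ≤ j → cyl ρ ⊆ tailU p₁.φ n ∪ RR := by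
    rintro j ρ ⟨p, hp, hρ⟩ hnj x hx
    have hxt : x ∈ tailU p.φ n := subset_tailU hnj hρ hx
    rcases htail_sub p hp hxt with h | h
    · exact Or.inl (hUC_tail p₁ hp₁ h)
    · exact Or.inr (Set.mem_iUnion₂.mpr ⟨p, hp, h⟩)
  set bad : Set (List Bool) := {τ | (1/2 : ENNReal) ^ τ.length ≤ μC (Ec τ)} with hbad
  set NN : Set (ℕ → Bool) := ⋃ τ ∈ bad, (cyl τ \ Ec τ) with hNN
  have hNNnull : μC NN = 0 := by
    rw [hNN]
    refine (measure_biUnion_null_iff (Set.to_countable bad)).mpr ?_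
    intro τ hτ
    have hd : μC (cyl τ \ Ec τ) = μC (cyl τ) - μC (Ec τ) :=
      measure_diff (hEc_cyl τ) (hEc_meas τ).nullMeasurableSet (μC_ne_top _)
    rw [hd]
    exact tsub_eq_zero_of_le (le_trans (μC_cyl_le τ) hτ)
  have hcylbad : ∀ τ, (1/2 : ENNReal) ^ τ.length ≤ μC (Ec τ) → cyl τ ⊆ Ec τ ∪ NN := by
    intro τ hτ x hx
    by_cases hxe : x ∈ Ec τ
    · exact Or.inl hxe
    · exact Or.inr (Set.mem_iUnion₂.mpr ⟨τ, hτ, hx, hxe⟩)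
  have hEc_trans : ∀ σ τ : List Bool, σ <+: τ → σ.length < τ.length → Ec τ ⊆ Ec σ := by
    intro σ τ hpre hlt x hx
    obtain ⟨τ', ⟨hp', hne', j', hj', hmem'⟩, hx'⟩ := mem_estU.mp hx
    have hlen' : τ'.length = j' := hcomb_len j' τ' hmem'
    refine mem_estU.mpr ⟨τ', ⟨hpre.trans hp', ?_, j', by omega, hmem'⟩, hx'⟩
    intro heq
    rw [heq] at hlt
    omega
  -- claim 1
  have claim1 : ∀ σ : List Bool, σ ∉ qφ σ.length → estU qφ σ.length σ ⊆ Ec σ ∪ NN := by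
    intro σ hσ x hx
    obtain ⟨τ, ⟨hpre, hne, j, hj, hτ⟩, hx'⟩ := mem_estU.mp hx
    by_cases hjn : j < n
    · rw [hqφ_lt j hjn, ← hcomb_lt j hjn] at hτ
      exact Or.inl (mem_estU.mpr ⟨τ, ⟨hpre, hne, j, hj, hτ⟩, hx'⟩)
    · rw [hqφ_ge j hjn] at hτ
      obtain ⟨hτlen, hcase⟩ := hτ
      rcases hcase with ⟨j₀, hj₀n, ρ, hρc, hρτ⟩ | hthr
      · have hρlen : ρ.length = j₀ := hcomb_len j₀ ρ hρc
        by_cases hj₀σ : ρ.length ≤ σ.length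
        · exfalso
          have hρσ : ρ <+: σ := List.prefix_of_prefix_length_le hρτ hpre hj₀σ
          apply hσ
          rw [hqφ_ge σ.length (by omega)]
          exact ⟨rfl, Or.inl ⟨j₀, hj₀n, ρ, hρc, hρσ⟩⟩
        · have hσρ : σ <+: ρ := List.prefix_of_prefix_length_le hpre hρτ (by omega)
          refine Or.inl (mem_estU.mpr ⟨ρ, ⟨hσρ, ?_, j₀, by omega, hρc⟩, cyl_mono hρτ hx'⟩)
          intro heq
          rw [heq] at hj₀σ
          omega
      · have hthr' : (1/2 : ENNReal) ^ τ.length ≤ μC (Ec τ) := by rw [hτlen]; exact hthr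
        rcases hcylbad τ hthr' hx' with hxe | hxn
        · exact Or.inl (hEc_trans σ τ hpre (by omega) hxe)
        · exact Or.inr hxn
  -- claim 2
  have claim2 : ∀ σ : List Bool, σ.length < n → Ec σ ⊆ estU p₁.φ σ.length σ ∪ RR := by
    intro σ hσn x hx
    obtain ⟨τ, ⟨hpre, hne, j, hj, hτc⟩, hx'⟩ := mem_estU.mp hx
    obtain ⟨p, hp, hτp⟩ := hτc
    by_cases hjn : j < n
    · rw [hagree p hp j hjn] at hτp
      exact Or.inl (mem_estU.mpr ⟨τ, ⟨hpre, hne, j, hj, hτp⟩, hx'⟩)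
    · have hxt : x ∈ tailU p.φ n := subset_tailU (not_lt.mp hjn) hτp hx'
      by_cases hxU : x ∈ UC
      · obtain ⟨τ', hτ'C, hxτ'⟩ := Set.mem_iUnion₂.mp hxU
        obtain ⟨i', hi'n, hτ'p₁⟩ := hC p₁ hp₁ τ' hτ'C
        have hτ'len : τ'.length = i' := p₁.hlen i' τ' hτ'p₁
        have hxσ : x ∈ cyl σ := cyl_mono hpre hx'
        have hστ' : σ <+: τ' := by
          rcases cyl_compat hxσ hxτ' with h | h
          · exact h
          · exfalso
            have := h.length_le
            omega
        refine Or.inl (mem_estU.mpr ⟨τ', ⟨hστ', ?_, i', by omega, hτ'p₁⟩, hxτ'⟩)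
        intro heq
        rw [heq] at hσn
        omega
      · exact Or.inr (Set.mem_iUnion₂.mpr ⟨p, hp, hxt, hxU⟩)
  have hEc_tail : ∀ σ : List Bool, n ≤ σ.length → Ec σ ⊆ tailU p₁.φ n ∪ RR := by
    intro σ hσ x hx
    obtain ⟨τ, ⟨hpre, hne, j, hj, hτc⟩, hx'⟩ := mem_estU.mp hx
    exact hcomb_cyl j τ hτc (by omega) hx'
  have hEc_full : ∀ σ : List Bool, Ec σ ⊆ fullU p₁.φ ∪ RR := by
    intro σ x hx
    obtain ⟨τ, ⟨hpre, hne, j, hj, hτc⟩, hx'⟩ := mem_estU.mp hx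
    by_cases hjn : j < n
    · rw [hcomb_lt j hjn] at hτc
      exact Or.inl (subset_fullU hτc hx')
    · rcases hcomb_cyl j τ hτc (not_lt.mp hjn) hx' with h | h
      · exact Or.inl (tailU_subset_fullU p₁.φ n h)
      · exact Or.inr h
  -- claim 3a
  have claim3a : fullU qφ ⊆ (fullU p₁.φ ∪ RR) ∪ NN := by
    intro x hx
    obtain ⟨i, σ, hσ, hx'⟩ := mem_fullU.mp hx
    by_cases hin : i < n
    · rw [hqφ_lt i hin] at hσ
      exact Or.inl (Or.inl (subset_fullU hσ hx'))
    · rw [hqφ_ge i hin] at hσ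
      obtain ⟨hlen, hcase⟩ := hσ
      rcases hcase with ⟨j₀, hj₀, ρ, hρc, hρσ⟩ | hthr
      · rcases hcomb_cyl j₀ ρ hρc hj₀ (cyl_mono hρσ hx') with h | h
        · exact Or.inl (Or.inl (tailU_subset_fullU p₁.φ n h))
        · exact Or.inl (Or.inr h)
      · have hthr' : (1/2 : ENNReal) ^ σ.length ≤ μC (Ec σ) := by rw [hlen]; exact hthr
        rcases hcylbad σ hthr' hx' with h | h
        · exact Or.inl (hEc_full σ h)
        · exact Or.inr h
  -- claim 3b
  have claim3b : tailU qφ n ⊆ (tailU p₁.φ n ∪ RR) ∪ NN := by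
    intro x hx
    obtain ⟨i, hni, σ, hσ, hx'⟩ := mem_tailU.mp hx
    rw [hqφ_ge i (by omega)] at hσ
    obtain ⟨hlen, hcase⟩ := hσ
    rcases hcase with ⟨j₀, hj₀, ρ, hρc, hρσ⟩ | hthr
    · rcases hcomb_cyl j₀ ρ hρc hj₀ (cyl_mono hρσ hx') with h | h
      · exact Or.inl (Or.inl h)
      · exact Or.inl (Or.inr h)
    · have hthr' : (1/2 : ENNReal) ^ σ.length ≤ μC (Ec σ) := by rw [hlen]; exact hthr
      rcases hcylbad σ hthr' hx' with h | h
      · rcases hEc_tail σ (by omega) h with h2 | h2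
        · exact Or.inl (Or.inl h2)
        · exact Or.inl (Or.inr h2)
      · exact Or.inr h
  -- the condition q
  have hq_hlen : ∀ i : ℕ, ∀ σ ∈ qφ i, σ.length = i := by
    intro i σ hσ
    by_cases hin : i < n
    · rw [hqφ_lt i hin] at hσ
      exact p₁.hlen i σ hσ
    · rw [hqφ_ge i hin] at hσ
      exact hσ.1
  have hq_star : StarProperty qφ := by
    intro i σ hσlen hσq
    subst hσlen
    have hb : μC (estU qφ σ.length σ) ≤ μC (Ec σ) := by
      calc μC (estU qφ σ.length σ) ≤ μC (Ec σ ∪ NN) := measure_mono (claim1 σ hσq)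
      _ ≤ μC (Ec σ) + μC NN := measure_union_le _ _
      _ = μC (Ec σ) := by rw [hNNnull, add_zero]
    show μC (estU qφ σ.length σ) < (1/2 : ENNReal) ^ σ.length
    by_cases hin : σ.length < n
    · have hσp₁ : σ ∉ p₁.φ σ.length := by
        rw [← hqφ_lt _ hin]
        exact hσq
      calc μC (estU qφ σ.length σ) ≤ μC (Ec σ) := hb
      _ ≤ μC (estU p₁.φ σ.length σ ∪ RR) := measure_mono (claim2 σ hin)
      _ ≤ μC (estU p₁.φ σ.length σ) + μC RR := measure_union_le _ _
      _ ≤ μC (estU p₁.φ σ.length σ) + γ := add_le_add_right hRRμ _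
      _ < (1/2 : ENNReal) ^ σ.length := g3 _ hin σ rfl hσp₁
    · have hnthr : ¬ (1/2 : ENNReal) ^ σ.length ≤ μC (Ec σ) := by
        intro hthr
        apply hσq
        rw [hqφ_ge _ hin]
        exact ⟨rfl, Or.inr hthr⟩
      exact lt_of_le_of_lt hb (not_le.mp hnthr)
  have hq_meas : μC (fullU qφ) < 1 / 2 := by
    calc μC (fullU qφ) ≤ μC ((fullU p₁.φ ∪ RR) ∪ NN) := measure_mono claim3a
    _ ≤ μC (fullU p₁.φ ∪ RR) + μC NN := measure_union_le _ _
    _ = μC (fullU p₁.φ ∪ RR) := by rw [hNNnull, add_zero]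
    _ ≤ μC (fullU p₁.φ) + μC RR := measure_union_le _ _
    _ ≤ μC (fullU p₁.φ) + γ := add_le_add_right hRRμ _
    _ < 1 / 2 := g1
  refine ⟨⟨n, qφ, hq_hlen, hq_star, hq_meas⟩, ?_, ?_⟩
  · -- InAPP
    have hhead : ∀ k, k ≤ n → headU qφ k = headU p₁.φ k := by
      intro k hk
      unfold headU
      refine Set.iUnion_congr fun i => Set.iUnion_congr fun hi => ?_
      rw [hqφ_lt i (lt_of_lt_of_le hi hk)]
    refine ⟨m, ?_, ?_, ?_⟩
    · show 1 / 2 < μC (headU qφ n) + (1/2 : ENNReal) ^ m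
      rw [hhead n le_rfl]
      exact hwitA
    · show μC (headU qφ (n - 1)) + (1/2 : ENNReal) ^ m ≤ 1 / 2
      rw [hhead (n - 1) (Nat.sub_le n 1)]
      exact hwitB
    · show μC (tailU qφ n) < (1/2 : ENNReal) ^ (m + 7)
      calc μC (tailU qφ n) ≤ μC ((tailU p₁.φ n ∪ RR) ∪ NN) := measure_mono claim3b
      _ ≤ μC (tailU p₁.φ n ∪ RR) + μC NN := measure_union_le _ _
      _ = μC (tailU p₁.φ n ∪ RR) := by rw [hNNnull, add_zero]
      _ ≤ μC (tailU p₁.φ n) + μC RR := measure_union_le _ _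
      _ ≤ μC (tailU p₁.φ n) + γ := add_le_add_right hRRμ _
      _ < (1/2 : ENNReal) ^ (m + 7) := g2
  · -- APrimeLe
    intro p hp
    refine ⟨(hn p hp).le, ?_, ?_⟩
    · intro i hi
      have hin : i < n := by rw [← hn p hp]; exact hi
      show qφ i = p.φ i
      rw [hqφ_lt i hin, ← hagree p hp i hin]
    · intro i σ hσ
      by_cases hin : i < n
      · refine ⟨i, le_rfl, σ, ?_, List.prefix_refl σ⟩
        show σ ∈ qφ i
        rw [hqφ_lt i hin, ← hagree p hp i hin]
        exact hσ
      · refine ⟨i, le_rfl, σ, ?_, List.prefix_refl σ⟩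
        show σ ∈ qφ i
        rw [hqφ_ge i hin]
        exact ⟨p.hlen i σ hσ, Or.inl ⟨i, not_lt.mp hin, σ, ⟨p, hp, hσ⟩, List.prefix_refl σ⟩⟩


/-- For every uncountable set `T` of conditions of `𝔸″` there are an initial segment `u`
(with domain `n`) and an uncountable `T' ⊆ T` all of whose elements have first coordinate `u`,
such that for every `ℓ` some `F ⊆ T'` of cardinality `ℓ` has a common lower bound in `𝔸″`. -/
theorem APP_uncountable_has_centered_refinement
    (T : Set APrime) (hT : ∀ p ∈ T, InAPP p) (hunc : ¬ T.Countable) :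
    ∃ (n : ℕ) (u : ℕ → Set (List Bool)) (T' : Set APrime),
      T' ⊆ T ∧ ¬ T'.Countable ∧
      (∀ p ∈ T', p.n = n ∧ ∀ i < n, p.φ i = u i) ∧
      (∀ ℓ : ℕ, ∃ F ⊆ T', F.Finite ∧ F.ncard = ℓ ∧
        ∃ q : APrime, InAPP q ∧ ∀ p ∈ F, APrimeLe q p) := by
  classical
  have hfin : ∀ (p : APrime) (i : ℕ), (p.φ i).Finite := fun p i =>
    Set.Finite.subset (List.finite_length_eq Bool i) fun σ hσ => p.hlen i σ hσ
  set mw : APrime → ℕ := fun p => if h : InAPP p then h.choose else 0 with hmw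
  set enc : APrime → ℕ × ℕ × List (Finset (List Bool)) :=
    fun p => (p.n, mw p, (List.range p.n).map fun i => (hfin p i).toFinset) with henc
  obtain ⟨⟨n, m, L⟩, hTT⟩ := exists_uncountable_fiber hunc enc
  set T' : Set APrime := {p ∈ T | enc p = (n, m, L)} with hT'def
  have hT'sub : T' ⊆ T := fun p hp => hp.1
  have hT'unc : ¬ T'.Countable := hTT
  have hT'ne : T'.Nonempty := by
    by_contra h
    exact hT'unc ((Set.not_nonempty_iff_eq_empty.mp h) ▸ Set.countable_empty)
  obtain ⟨p₀, hp₀⟩ := hT'ne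
  have hT'n : ∀ p ∈ T', p.n = n := by
    intro p hp
    have h := hp.2
    simp only [henc, Prod.mk.injEq] at h
    exact h.1
  have hT'm : ∀ p ∈ T', mw p = m := by
    intro p hp
    have h := hp.2
    simp only [henc, Prod.mk.injEq] at h
    exact h.2.1
  have hT'L : ∀ p ∈ T',
      (List.range n).map (fun i => (hfin p i).toFinset) = L := by
    intro p hp
    have h := hp.2
    simp only [henc, Prod.mk.injEq] at h
    rw [← hT'n p hp]
    exact h.2.2
  have hagree0 : ∀ p ∈ T', ∀ i < n, p.φ i = p₀.φ i := by
    intro p hp i hi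
    have e : (List.range n).map (fun i => (hfin p i).toFinset) =
        (List.range n).map (fun i => (hfin p₀ i).toFinset) :=
      (hT'L p hp).trans (hT'L p₀ hp₀).symm
    have hfe : (hfin p i).toFinset = (hfin p₀ i).toFinset := by
      have h3 : ((List.range n).map (fun i => (hfin p i).toFinset))[i]'(by simp [hi]) =
          ((List.range n).map (fun i => (hfin p₀ i).toFinset))[i]'(by simp [hi]) := by
        simp_rw [e]
      simpa using h3
    calc p.φ i = ↑(hfin p i).toFinset := ((hfin p i).coe_toFinset).symm
    _ = ↑(hfin p₀ i).toFinset := by rw [hfe]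
    _ = p₀.φ i := (hfin p₀ i).coe_toFinset
  -- the three witness conditions with the common m, for every p ∈ T'
  have hwit : ∀ p ∈ T',
      (1 / 2 < μC (headU p.φ n) + (1/2 : ENNReal) ^ m ∧
       μC (headU p.φ (n - 1)) + (1/2 : ENNReal) ^ m ≤ 1 / 2 ∧
       μC (tailU p.φ n) < (1/2 : ENNReal) ^ (m + 7)) := by
    intro p hp
    have hI : InAPP p := hT p (hT'sub hp)
    have hmc : mw p = hI.choose := dif_pos hI
    have hm : m = hI.choose := by rw [← hmc]; exact (hT'm p hp).symm
    obtain ⟨h1, h2, h3⟩ := hI.choose_spec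
    rw [← hm] at h1 h2 h3
    rw [hT'n p hp] at h1 h2 h3
    exact ⟨h1, h2, h3⟩
  refine ⟨n, p₀.φ, T', hT'sub, hT'unc, fun p hp => ⟨hT'n p hp, hagree0 p hp⟩, ?_⟩
  intro ℓ
  rcases Nat.eq_zero_or_pos ℓ with rfl | hℓpos
  · refine ⟨∅, Set.empty_subset _, Set.finite_empty, Set.ncard_empty _, p₀,
      hT p₀ (hT'sub hp₀), fun p hp => absurd hp (Set.notMem_empty p)⟩
  -- uniform gap refinement
  have hJp : ∀ p ∈ T', ∃ J : ℕ,
      (μC (fullU p.φ) + (1/2 : ENNReal) ^ J < 1 / 2 ∧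
       μC (tailU p.φ n) + (1/2 : ENNReal) ^ J < (1/2 : ENNReal) ^ (m + 7) ∧
       ∀ σ : List Bool, σ.length < n → σ ∉ p.φ σ.length →
         μC (estU p.φ σ.length σ) + (1/2 : ENNReal) ^ J < (1/2 : ENNReal) ^ σ.length) := by
    intro p hp
    obtain ⟨J1, hJ1⟩ := exists_pow_gap p.hmeas
    obtain ⟨J2, hJ2⟩ := exists_pow_gap (hwit p hp).2.2
    have hstar3 : ∃ J3 : ℕ, ∀ σ ∈ {σ : List Bool | σ.length < n},
        (σ ∉ p.φ σ.length →
          μC (estU p.φ σ.length σ) + (1/2 : ENNReal) ^ J3 < (1/2 : ENNReal) ^ σ.length) := by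
      refine exists_uniform_J (List.finite_length_lt Bool n) _ ?_ ?_
      · intro σ J J' hJJ' hP hσ
        refine lt_of_le_of_lt (add_le_add_right (half_pow_anti hJJ') _) (hP hσ)
      · intro σ hσ
        by_cases hmem : σ ∈ p.φ σ.length
        · exact ⟨0, fun h => absurd hmem h⟩
        · obtain ⟨J, hJ⟩ := exists_pow_gap (p.hstar σ.length σ rfl hmem)
          exact ⟨J, fun _ => hJ⟩
    obtain ⟨J3, hJ3⟩ := hstar3
    refine ⟨max (max J1 J2) J3, ?_, ?_, ?_⟩
    · exact lt_of_le_of_lt (add_le_add_right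
        (half_pow_anti ((le_max_left J1 J2).trans (le_max_left _ J3))) _) hJ1
    · exact lt_of_le_of_lt (add_le_add_right
        (half_pow_anti ((le_max_right J1 J2).trans (le_max_left _ J3))) _) hJ2
    · intro σ hσn hσmem
      exact lt_of_le_of_lt (add_le_add_right
        (half_pow_anti (le_max_right _ J3)) _) (hJ3 σ hσn hσmem)
  set Jf : APrime → ℕ := fun p => if hp : p ∈ T' then (hJp p hp).choose else 0 with hJf
  obtain ⟨J, hT''⟩ := exists_uncountable_fiber hT'unc Jf
  set T'' : Set APrime := {p ∈ T' | Jf p = J} with hT''def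
  have hT''unc : ¬ T''.Countable := hT''
  have hT''sub : T'' ⊆ T' := fun p hp => hp.1
  have hGap : ∀ p ∈ T'',
      (μC (fullU p.φ) + (1/2 : ENNReal) ^ J < 1 / 2 ∧
       μC (tailU p.φ n) + (1/2 : ENNReal) ^ J < (1/2 : ENNReal) ^ (m + 7) ∧
       ∀ σ : List Bool, σ.length < n → σ ∉ p.φ σ.length →
         μC (estU p.φ σ.length σ) + (1/2 : ENNReal) ^ J < (1/2 : ENNReal) ^ σ.length) := by
    intro p hp
    have h1 : Jf p = (hJp p hp.1).choose := dif_pos hp.1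
    have h2 : J = (hJp p hp.1).choose := by rw [← h1]; exact hp.2.symm
    rw [h2]
    exact (hJp p hp.1).choose_spec
  set γ : ENNReal := (1/2 : ENNReal) ^ J with hγ
  set η : ENNReal := (1/2 : ENNReal) ^ (J + ℓ) with hη
  have hηpos : 0 < η := ENNReal.pow_pos (by norm_num) _
  -- finite approximation refinement
  have hCp : ∀ p ∈ T'', ∃ Cp : Finset (List Bool),
      (↑Cp ⊆ {σ : List Bool | ∃ i, n ≤ i ∧ σ ∈ p.φ i} ∧
        μC (tailU p.φ n \ ⋃ σ ∈ (Cp : Set (List Bool)), cyl σ) ≤ η) := by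
    intro p hp
    obtain ⟨Cp, hC1, hC2⟩ := exists_finset_approx {σ : List Bool | ∃ i, n ≤ i ∧ σ ∈ p.φ i} hηpos
    refine ⟨Cp, hC1, ?_⟩
    rw [tailU_eq_biUnion p.φ n]
    exact hC2
  set Cf : APrime → Finset (List Bool) :=
    fun p => if hp : p ∈ T'' then (hCp p hp).choose else ∅ with hCf
  obtain ⟨C, hS⟩ := exists_uncountable_fiber hT''unc Cf
  set S : Set APrime := {p ∈ T'' | Cf p = C} with hSdef
  have hSunc : ¬ S.Countable := hS
  have hSsub : S ⊆ T'' := fun p hp => hp.1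
  have hSC : ∀ p ∈ S,
      (↑C ⊆ {σ : List Bool | ∃ i, n ≤ i ∧ σ ∈ p.φ i} ∧
        μC (tailU p.φ n \ ⋃ σ ∈ (C : Set (List Bool)), cyl σ) ≤ η) := by
    intro p hp
    have h1 : Cf p = (hCp p hp.1).choose := dif_pos hp.1
    have h2 : C = (hCp p hp.1).choose := by rw [← h1]; exact hp.2.symm
    rw [h2]
    exact (hCp p hp.1).choose_spec
  have hSinf : S.Infinite := fun h => hSunc h.countable
  obtain ⟨Ft, hFtS, hFtcard⟩ := hSinf.exists_subset_card_eq ℓ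
  have hFtne : Ft.Nonempty := Finset.card_pos.mp (by rw [hFtcard]; exact hℓpos)
  obtain ⟨p₁, hp₁⟩ := hFtne
  have hFtT' : ∀ p ∈ Ft, p ∈ T' := fun p hp => hT''sub (hSsub (hFtS hp))
  have hsum : (Ft.card : ENNReal) * η ≤ γ := by
    rw [hFtcard, hη, hγ, pow_add]
    have hl1 : (ℓ : ENNReal) * (1/2 : ENNReal) ^ ℓ ≤ 1 := by
      have h1 : (ℓ : ENNReal) ≤ 2 ^ ℓ := by exact_mod_cast (Nat.lt_two_pow_self (n := ℓ)).le
      calc (ℓ : ENNReal) * (1/2 : ENNReal) ^ ℓ ≤ 2 ^ ℓ * (1/2 : ENNReal) ^ ℓ :=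
        mul_le_mul_left h1 _
      _ = 1 := by
        rw [← mul_pow]
        norm_num
        rw [ENNReal.mul_inv_cancel (by norm_num) (by norm_num)]
        exact one_pow ℓ
    calc (ℓ : ENNReal) * ((1/2 : ENNReal) ^ J * (1/2 : ENNReal) ^ ℓ) =
        (1/2 : ENNReal) ^ J * ((ℓ : ENNReal) * (1/2 : ENNReal) ^ ℓ) := by ring
    _ ≤ (1/2 : ENNReal) ^ J * 1 := mul_le_mul_right hl1 _
    _ = (1/2 : ENNReal) ^ J := mul_one _
  obtain ⟨q, hqI, hqle⟩ := construct n m γ η Ft p₁ hp₁ C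
    (fun p hp => hT'n p (hFtT' p hp))
    (fun p hp i hi => (hagree0 p (hFtT' p hp) i hi).trans
      (hagree0 p₁ (hFtT' p₁ hp₁) i hi).symm)
    (hwit p₁ (hFtT' p₁ hp₁)).1
    (hwit p₁ (hFtT' p₁ hp₁)).2.1
    (hGap p₁ (hSsub (hFtS hp₁))).1
    (hGap p₁ (hSsub (hFtS hp₁))).2.1
    (fun i hi σ hσlen hσmem => by
      subst hσlen
      exact (hGap p₁ (hSsub (hFtS hp₁))).2.2 σ hi hσmem)
    (fun p hp σ hσ => (hSC p (hFtS hp)).1 hσ)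
    (fun p hp => (hSC p (hFtS hp)).2)
    hsum
  exact ⟨↑Ft, fun p hp => hFtT' p hp, Ft.finite_toSet,
    by rw [Set.ncard_coe_finset, hFtcard], q, hqI, fun p hp => hqle p hp⟩

end
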